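/- Let V be an n-dimensional vector space over a field K, A an endomorphism of V, and e ∈ V a cyclic vector for A (i.e., e, Ae, ..., A^{n-1}e is a basis). If b is a symmetric bilinear form on V satisfying b(e,·)=0 and b(Y, AZ) = b(Z, AY) for all Y, Z ∈ V, then b = 0. -/

import Mathlib

/-- If `e` is a cyclic vector for `A` on an `n`-dimensional space and `b` is a symmetric
bilinear form with `b e = 0` and `b Y (A Z) = b Z (A Y)`, then `b = 0`. -/
theorem stmt0 {K V : Type*} [Field K] [AddCommGroup V] [Module K V] {n : ℕ}
    (A : Module.End K V) (e : V)
    (bas : Module.Basis (Fin n) K V) (hbas : ∀ i : Fin n, bas i = (A ^ (i : ℕ)) e)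
    (b : V →ₗ[K] V →ₗ[K] K)
    (hsymm : ∀ x y, b x y = b y x)
    (he : ∀ z, b e z = 0)
    (hA : ∀ y z, b y (A z) = b z (A y)) :
    b = 0 := by
  have key : ∀ i j : ℕ, b ((A ^ i) e) ((A ^ j) e) = 0 := by
    intro i
    induction i with
    | zero => intro j; simpa using he _
    | succ i ih =>
      intro j
      have : b ((A ^ (i + 1)) e) ((A ^ j) e) = b ((A ^ i) e) ((A ^ (j + 1)) e) := by
        rw [hsymm]
        rw [pow_succ', pow_succ']
        simp only [Module.End.mul_apply]
        exact hA _ _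
      rw [this, ih]
  apply bas.ext
  intro i
  apply bas.ext
  intro j
  rw [hbas, hbas]
  simpa using key i j
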